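/- There is an absolute constant C such that for every unary language L ⊆ {a}* admitting an indicator pair of size m, there exists a udpda A of size at most C·m with L(A) = L. -/

import Mathlib

/-- A straight-line program in Chomsky normal form over alphabet `α`:
nonterminals are `Fin n`, each production is either a terminal or a pair of
nonterminals with strictly smaller indices (this index condition is a
topological ordering witnessing acyclicity of the SLP).  The size of such an
SLP is its number `n` of nonterminals. -/
structure CnfSLP (α : Type) where
  n : ℕ
  ax : Fin n
  prod : Fin n → α ⊕ (Fin n × Fin n)
  wf : ∀ (i B C : Fin n), prod i = Sum.inr (B, C) → B < i ∧ C < i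

namespace CnfSLP

variable {α : Type}

/-- The word generated by nonterminal `i`. -/
def strAt (P : CnfSLP α) : Fin P.n → List α
  | i =>
    match h : P.prod i with
    | Sum.inl a => [a]
    | Sum.inr (B, C) => P.strAt B ++ P.strAt C
termination_by i => i.val
decreasing_by
  · exact (P.wf i B C h).1
  · exact (P.wf i B C h).2

/-- The word generated by the SLP (from its axiom). -/
def str (P : CnfSLP α) : List α := P.strAt P.ax

/-- The size of an SLP: the number of nonterminals (in Chomsky normal form). -/
def size (P : CnfSLP α) : ℕ := P.n

end CnfSLP

/-- `Generates u w c` means the infinite sequence `u · w^ω` is well defined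
(`w` is nonempty) and equals the sequence `c`. -/
def Generates {α : Type} (u w : List α) (c : ℕ → α) : Prop :=
  w ≠ [] ∧ ∀ i : ℕ,
    (if i < u.length then u[i]? else w[(i - u.length) % w.length]?) = some (c i)

/-- `(P1, P2)` is an indicator pair for the unary language `L ⊆ {a}*`
(identified with the set of lengths of its words): the pair of SLPs over
`{0,1}` (here `Bool`, with `true` playing the role of `1`) generates the
characteristic sequence of `L`. -/
def IsIndicatorPair (P1 P2 : CnfSLP Bool) (L : Set ℕ) : Prop :=
  ∃ c : ℕ → Bool, (∀ i, (c i = true ↔ i ∈ L)) ∧ Generates P1.str P2.str c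

/-- The data of a unary pushdown automaton over the input alphabet `{a}`
(a transition whose `Bool` component is `true` reads `a`, otherwise it
reads `ε`): bottom-of-stack symbol, initial state, final states, transitions. -/
structure PrePDA (Q Γ : Type) where
  bot : Γ
  init : Q
  final : Set Q
  δ : Set (Q × Bool × Γ × Q × List Γ)

namespace PrePDA

variable {Q Γ : Type}

/-- Valid stack contents: a word in `(Γ∖{⊥})*⊥`. -/
def IsStack (A : PrePDA Q Γ) (s : List Γ) : Prop :=
  ∃ s', A.bot ∉ s' ∧ s = s' ++ [A.bot]

/-- A move from configuration `c1` to `c2` reading `a` (if `σ = true`)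
or `ε` (if `σ = false`). -/
def Move (A : PrePDA Q Γ) (c1 : Q × List Γ) (σ : Bool) (c2 : Q × List Γ) : Prop :=
  ∃ γ w, (c1.1, σ, γ, c2.1, w) ∈ A.δ ∧
    (((γ ≠ A.bot ∨ w ≠ []) ∧ ∃ s', c1.2 = γ :: s' ∧ c2.2 = w ++ s') ∨
      (γ = A.bot ∧ w = [] ∧ c1.2 = [A.bot] ∧ c2.2 = [A.bot]))

/-- `Steps A c1 k c2`: there is a finite computation from `c1` to `c2`
reading the word `a^k`. -/
inductive Steps (A : PrePDA Q Γ) : Q × List Γ → ℕ → Q × List Γ → Prop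
  | refl (c : Q × List Γ) : Steps A c 0 c
  | tail {c1 : Q × List Γ} {k : ℕ} {c2 : Q × List Γ} {σ : Bool} {c3 : Q × List Γ} :
      Steps A c1 k c2 → A.Move c2 σ c3 → Steps A c1 (k + (if σ then 1 else 0)) c3

/-- The language of the automaton, as a set of natural numbers:
`a^k` is accepted iff `k` is in this set (acceptance by final state,
starting from the configuration `(q₀, ⊥)`). -/
def lang (A : PrePDA Q Γ) : Set ℕ :=
  {k | ∃ c : Q × List Γ, A.Steps (A.init, [A.bot]) k c ∧ c.1 ∈ A.final}

end PrePDA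

/-- A unary deterministic pushdown automaton (udpda): finitely many states and
stack symbols, well-formed transitions (each pushed word has length at most 2,
and the bottom symbol is neither pushed above other symbols nor removed), and
at most one move available at every configuration. -/
structure UDPDA (Q Γ : Type) extends PrePDA Q Γ where
  finQ : Finite Q
  finΓ : Finite Γ
  wf : ∀ q1 σ γ q2 w, (q1, σ, γ, q2, w) ∈ δ →
    w.length ≤ 2 ∧
      ((γ ≠ bot ∧ bot ∉ w) ∨ (γ = bot ∧ (w = [] ∨ ∃ w', bot ∉ w' ∧ w = w' ++ [bot])))
  det : ∀ c σ1 c1 σ2 c2, toPrePDA.IsStack c.2 →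
    toPrePDA.Move c σ1 c1 → toPrePDA.Move c σ2 c2 → σ1 = σ2 ∧ c1 = c2

namespace UDPDA

variable {Q Γ : Type}

/-- The size of a udpda: `|Q| · |Γ|`. -/
noncomputable def size (A : UDPDA Q Γ) : ℕ := Nat.card Q * Nat.card Γ

/-- The language of a udpda. -/
def lang (A : UDPDA Q Γ) : Set ℕ := A.toPrePDA.lang

end UDPDA
namespace CnfSLP
variable {α : Type}

theorem strAt_inl (P : CnfSLP α) (i : Fin P.n) (b : α) (h : P.prod i = Sum.inl b) :
    P.strAt i = [b] := by
  rw [strAt.eq_def]; dsimp only; rw [h]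

theorem strAt_inr (P : CnfSLP α) (i B C : Fin P.n) (h : P.prod i = Sum.inr (B, C)) :
    P.strAt i = P.strAt B ++ P.strAt C := by
  rw [strAt.eq_def]; dsimp only; rw [h]

def nodes (P : CnfSLP α) : Fin P.n → ℕ
  | i =>
    match h : P.prod i with
    | Sum.inl _ => 1
    | Sum.inr (B, C) => nodes P B + nodes P C + 1
termination_by i => i.val
decreasing_by
  · exact (P.wf i B C h).1
  · exact (P.wf i B C h).2

theorem nodes_inl (P : CnfSLP α) (i : Fin P.n) (b : α) (h : P.prod i = Sum.inl b) :
    P.nodes i = 1 := by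
  rw [nodes.eq_def]; dsimp only; rw [h]

theorem nodes_inr (P : CnfSLP α) (i B C : Fin P.n) (h : P.prod i = Sum.inr (B, C)) :
    P.nodes i = P.nodes B + P.nodes C + 1 := by
  rw [nodes.eq_def]; dsimp only; rw [h]

end CnfSLP
namespace IndPair

open CnfSLP

/-- States of the udpda. -/
inductive St where
  | start : St
  | expand : St
  | out : Bool → St
deriving DecidableEq

instance : Fintype St where
  elems := {St.start, St.expand, St.out false, St.out true}
  complete := by intro x; cases x with
    | out b => cases b <;> simp
    | _ => simp

theorem card_St : Nat.card St = 4 := by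
  simp [Nat.card_eq_fintype_card]
  rfl

variable (P1 P2 : CnfSLP Bool)

/-- Stack nonterminal symbols. -/
abbrev Sym := Fin P1.n ⊕ Fin P2.n

/-- Stack symbols: nonterminals plus the bottom symbol `none`. -/
abbrev Gam := Option (Sym P1 P2)

def prodSym : Sym P1 P2 → Bool ⊕ (Sym P1 P2 × Sym P1 P2)
  | Sum.inl i =>
    match P1.prod i with
    | Sum.inl b => Sum.inl b
    | Sum.inr (B, C) => Sum.inr (Sum.inl B, Sum.inl C)
  | Sum.inr i =>
    match P2.prod i with
    | Sum.inl b => Sum.inl b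
    | Sum.inr (B, C) => Sum.inr (Sum.inr B, Sum.inr C)

def expSym : Sym P1 P2 → List Bool
  | Sum.inl i => P1.strAt i
  | Sum.inr i => P2.strAt i

def nodesSym : Sym P1 P2 → ℕ
  | Sum.inl i => P1.nodes i
  | Sum.inr i => P2.nodes i

variable {P1 P2}

theorem expSym_inl {N : Sym P1 P2} {b : Bool} (h : prodSym P1 P2 N = Sum.inl b) :
    expSym P1 P2 N = [b] := by
  cases N with
  | inl i =>
    rcases h2 : P1.prod i with b' | ⟨B, C⟩ <;> simp [prodSym, h2] at h
    simp [expSym, P1.strAt_inl i b' h2, h]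
  | inr i =>
    rcases h2 : P2.prod i with b' | ⟨B, C⟩ <;> simp [prodSym, h2] at h
    simp [expSym, P2.strAt_inl i b' h2, h]

theorem expSym_inr {N B C : Sym P1 P2} (h : prodSym P1 P2 N = Sum.inr (B, C)) :
    expSym P1 P2 N = expSym P1 P2 B ++ expSym P1 P2 C := by
  cases N with
  | inl i =>
    rcases h2 : P1.prod i with b' | ⟨B', C'⟩ <;> simp [prodSym, h2] at h
    rcases h with ⟨hB, hC⟩
    subst hB; subst hC
    simp [expSym, P1.strAt_inr i B' C' h2]
  | inr i =>
    rcases h2 : P2.prod i with b' | ⟨B', C'⟩ <;> simp [prodSym, h2] at h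
    rcases h with ⟨hB, hC⟩
    subst hB; subst hC
    simp [expSym, P2.strAt_inr i B' C' h2]

theorem nodesSym_inr {N B C : Sym P1 P2} (h : prodSym P1 P2 N = Sum.inr (B, C)) :
    nodesSym P1 P2 N = nodesSym P1 P2 B + nodesSym P1 P2 C + 1 := by
  cases N with
  | inl i =>
    rcases h2 : P1.prod i with b' | ⟨B', C'⟩ <;> simp [prodSym, h2] at h
    rcases h with ⟨hB, hC⟩
    subst hB; subst hC
    simp [nodesSym, P1.nodes_inr i B' C' h2]
  | inr i =>
    rcases h2 : P2.prod i with b' | ⟨B', C'⟩ <;> simp [prodSym, h2] at h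
    rcases h with ⟨hB, hC⟩
    subst hB; subst hC
    simp [nodesSym, P2.nodes_inr i B' C' h2]

theorem nodesSym_pos (N : Sym P1 P2) : 1 ≤ nodesSym P1 P2 N := by
  cases N with
  | inl i =>
    rcases h2 : P1.prod i with b' | ⟨B', C'⟩
    · simp [nodesSym, P1.nodes_inl i b' h2]
    · simp [nodesSym, P1.nodes_inr i B' C' h2]
  | inr i =>
    rcases h2 : P2.prod i with b' | ⟨B', C'⟩
    · simp [nodesSym, P2.nodes_inl i b' h2]
    · simp [nodesSym, P2.nodes_inr i B' C' h2]

end IndPair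
namespace IndPair

variable (P1 P2 : CnfSLP Bool)

def exp : List (Sym P1 P2) → List Bool
  | [] => []
  | N :: l => expSym P1 P2 N ++ exp l

def weight : List (Sym P1 P2) → ℕ
  | [] => 0
  | N :: l => nodesSym P1 P2 N + weight l

/-- Encode a list of nonterminals as a stack. -/
def stk (l : List (Sym P1 P2)) : List (Gam P1 P2) := l.map some ++ [none]

/-- `Mseq v j`: the `j`-th element of the infinite sequence `v · str(P2)^ω`. -/
def Mseq (v : List Bool) (j : ℕ) : Option Bool :=
  if j < v.length then v[j]? else (P2.str)[(j - v.length) % P2.str.length]?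

def S1 : Sym P1 P2 := Sum.inl P1.ax
def S2 : Sym P1 P2 := Sum.inr P2.ax

def delta : Set (St × Bool × Gam P1 P2 × St × List (Gam P1 P2)) :=
  {t | t = (St.start, false, none, St.expand, [some (S1 P1 P2), none])
     ∨ t = (St.expand, false, none, St.expand, [some (S2 P1 P2), none])
     ∨ (∃ N B C, prodSym P1 P2 N = Sum.inr (B, C) ∧
          t = (St.expand, false, some N, St.expand, [some B, some C]))
     ∨ (∃ N b, prodSym P1 P2 N = Sum.inl b ∧
          t = (St.expand, false, some N, St.out b, []))
     ∨ (∃ b γ, t = (St.out b, true, γ, St.expand, [γ]))}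

def pda : PrePDA St (Gam P1 P2) where
  bot := none
  init := St.start
  final := {St.out true}
  δ := delta P1 P2

variable {P1 P2}

/-- In any transition, either `γ = ⊥` and `w ≠ []`, or `γ ≠ ⊥`. -/
theorem delta_shape {q σ γ q' w} (h : (q, σ, γ, q', w) ∈ delta P1 P2) :
    ¬(γ = none ∧ w = []) := by
  rcases h with h | h | ⟨N, B, C, _, h⟩ | ⟨N, b, _, h⟩ | ⟨b, γ', h⟩ <;>
    · simp only [Prod.mk.injEq] at h
      rintro ⟨h1, h2⟩
      simp_all

/-- Uniqueness of transitions for a given state and top symbol. -/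
theorem delta_unique {q σ γ q' w σ2 q2 w2}
    (h1 : (q, σ, γ, q', w) ∈ delta P1 P2) (h2 : (q, σ2, γ, q2, w2) ∈ delta P1 P2) :
    σ = σ2 ∧ q' = q2 ∧ w = w2 := by
  rcases h1 with h | h | ⟨N, B, C, hN, h⟩ | ⟨N, b, hN, h⟩ | ⟨b, γ', h⟩ <;>
    rcases h2 with g | g | ⟨N', B', C', hN', g⟩ | ⟨N', b', hN', g⟩ | ⟨b'', γ'', g⟩ <;>
    simp only [Prod.mk.injEq] at h g <;> simp_all

end IndPair
namespace IndPair

variable {P1 P2 : CnfSLP Bool}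

theorem stk_nil : stk P1 P2 [] = [none] := rfl

theorem stk_cons (N : Sym P1 P2) (l) : stk P1 P2 (N :: l) = some N :: stk P1 P2 l := rfl

theorem Mseq_cons_zero (b : Bool) (v : List Bool) : Mseq P2 (b :: v) 0 = some b := by
  simp [Mseq]

theorem Mseq_cons_succ (b : Bool) (v : List Bool) (j : ℕ) :
    Mseq P2 (b :: v) (j + 1) = Mseq P2 v j := by
  simp only [Mseq, List.length_cons]
  by_cases h : j < v.length
  · simp [h, Nat.succ_lt_succ h]
  · have h2 : ¬ (j + 1 < v.length + 1) := by omega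
    simp [h, h2]

theorem Mseq_wrap (hne : P2.str ≠ []) (j : ℕ) : Mseq P2 P2.str j = Mseq P2 [] j := by
  have hpos : 0 < P2.str.length := List.length_pos_iff.mpr hne
  simp only [Mseq, List.length_nil, Nat.not_lt_zero, if_false, Nat.sub_zero]
  by_cases h : j < P2.str.length
  · simp [h, Nat.mod_eq_of_lt h]
  · simp only [h, if_false]
    congr 1
    exact (Nat.mod_eq_sub_mod (by omega)).symm

@[simp] theorem pda_bot : (pda P1 P2).bot = none := rfl
@[simp] theorem pda_init : (pda P1 P2).init = St.start := rfl
@[simp] theorem pda_final : (pda P1 P2).final = {St.out true} := rfl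
@[simp] theorem pda_delta : (pda P1 P2).δ = delta P1 P2 := rfl

theorem steps_cast {Q Γ : Type} {A : PrePDA Q Γ} {c1 c2 k k'} (h : k = k')
    (hs : A.Steps c1 k c2) : A.Steps c1 k' c2 := h ▸ hs

theorem steps_trans {Q Γ : Type} {A : PrePDA Q Γ} {c1 c2 c3 k k'}
    (h1 : A.Steps c1 k c2) (h2 : A.Steps c2 k' c3) : A.Steps c1 (k + k') c3 := by
  induction h2 with
  | refl => exact h1
  | tail hs hm ih => exact steps_cast (by omega) (PrePDA.Steps.tail ih hm)

theorem move_single {Q Γ : Type} {A : PrePDA Q Γ} {c1 c2 σ} (hm : A.Move c1 σ c2) :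
    A.Steps c1 (if σ then 1 else 0) c2 :=
  steps_cast (by omega) (PrePDA.Steps.tail (PrePDA.Steps.refl c1) hm)

theorem move_of {q σ γ q' w} (s' : List (Gam P1 P2))
    (hδ : (q, σ, γ, q', w) ∈ delta P1 P2) (hne : γ ≠ none ∨ w ≠ []) :
    (pda P1 P2).Move (q, γ :: s') σ (q', w ++ s') :=
  ⟨γ, w, hδ, Or.inl ⟨hne, s', rfl, rfl⟩⟩

theorem exp_str1 : exp P1 P2 [S1 P1 P2] = P1.str := by
  simp [exp, expSym, S1, CnfSLP.str]

theorem exp_str2 : exp P1 P2 [S2 P1 P2] = P2.str := by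
  simp [exp, expSym, S2, CnfSLP.str]

/-- The constructed udpda. -/
def mkA (P1 P2 : CnfSLP Bool) : UDPDA St (Gam P1 P2) where
  toPrePDA := pda P1 P2
  finQ := inferInstance
  finΓ := inferInstance
  wf := by
    intro q1 σ γ q2 w h
    rcases h with h | h | ⟨N, B, C, hN, h⟩ | ⟨N, b, hN, h⟩ | ⟨b, γ', h⟩ <;>
      simp only [Prod.mk.injEq] at h
    · obtain ⟨h1, h2, h3, h4, h5⟩ := h; subst h3; subst h5
      exact ⟨by simp, Or.inr ⟨rfl, Or.inr ⟨[some (S1 P1 P2)], by simp, by simp⟩⟩⟩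
    · obtain ⟨h1, h2, h3, h4, h5⟩ := h; subst h3; subst h5
      exact ⟨by simp, Or.inr ⟨rfl, Or.inr ⟨[some (S2 P1 P2)], by simp, by simp⟩⟩⟩
    · obtain ⟨h1, h2, h3, h4, h5⟩ := h; subst h3; subst h5
      exact ⟨by simp, Or.inl ⟨by simp, by simp⟩⟩
    · obtain ⟨h1, h2, h3, h4, h5⟩ := h; subst h3; subst h5
      exact ⟨by simp, Or.inl ⟨by simp, by simp⟩⟩
    · obtain ⟨h1, h2, h3, h4, h5⟩ := h; subst h3; subst h5
      cases γ with
      | none => exact ⟨by simp, Or.inr ⟨rfl, Or.inr ⟨[], by simp, by simp⟩⟩⟩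
      | some N => exact ⟨by simp, Or.inl ⟨by simp, by simp⟩⟩
  det := by
    rintro ⟨q, s⟩ σ1 ⟨q1, s1⟩ σ2 ⟨q2, s2⟩ _ ⟨γ1, w1, hδ1, hbr1⟩ ⟨γ2, w2, hδ2, hbr2⟩
    rcases hbr1 with ⟨hne1, t1, he1, hf1⟩ | ⟨hγ1, hw1, _, _⟩
    swap
    · exact absurd ⟨hγ1, hw1⟩ (delta_shape hδ1)
    rcases hbr2 with ⟨hne2, t2, he2, hf2⟩ | ⟨hγ2, hw2, _, _⟩
    swap
    · exact absurd ⟨hγ2, hw2⟩ (delta_shape hδ2)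
    rw [he1] at he2
    obtain ⟨rfl, rfl⟩ : γ1 = γ2 ∧ t1 = t2 := by
      constructor <;> [exact (List.cons.injEq _ _ _ _ ▸ he2).1;
        exact (List.cons.injEq _ _ _ _ ▸ he2).2]
    obtain ⟨hσ, hq, hw⟩ := delta_unique hδ1 hδ2
    refine ⟨hσ, ?_⟩
    have hs12 : s1 = s2 := hf1.trans (by rw [hw]; exact hf2.symm)
    have hq12 : q1 = q2 := hq
    rw [hs12, hq12]

end IndPair
namespace IndPair

variable {P1 P2 : CnfSLP Bool}

/-- The run invariant. -/
def Inv (c : ℕ → Bool) (k : ℕ) (q : St) (s : List (Gam P1 P2)) : Prop :=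
  ∃ l : List (Sym P1 P2), s = stk P1 P2 l ∧
    match q with
    | St.start => k = 0 ∧ l = []
    | St.expand => ∀ j, Mseq P2 (exp P1 P2 l) j = some (c (k + j))
    | St.out b => b = c k ∧ ∀ j, Mseq P2 (exp P1 P2 l) j = some (c (k + 1 + j))

theorem stk_none_nil {l : List (Sym P1 P2)} {s' : List (Gam P1 P2)}
    (h : stk P1 P2 l = none :: s') : l = [] ∧ s' = [] := by
  cases l with
  | nil =>
    refine ⟨rfl, ?_⟩
    have := h.symm
    simpa [stk] using this
  | cons N t => simp [stk_cons] at h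

theorem stk_some_cons {l : List (Sym P1 P2)} {N : Sym P1 P2} {s' : List (Gam P1 P2)}
    (h : stk P1 P2 l = some N :: s') : ∃ t, l = N :: t ∧ s' = stk P1 P2 t := by
  cases l with
  | nil => simp [stk] at h
  | cons M t =>
    rw [stk_cons] at h
    obtain ⟨h1, h2⟩ := List.cons.injEq _ _ _ _ ▸ h
    exact ⟨t, by simp_all, h2.symm⟩

theorem inv_step {c : ℕ → Bool} (hGen : Generates P1.str P2.str c)
    {k : ℕ} {q : St} {s : List (Gam P1 P2)} {σ : Bool} {q2 : St} {s2 : List (Gam P1 P2)}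
    (hInv : Inv c k q s) (hm : (pda P1 P2).Move (q, s) σ (q2, s2)) :
    Inv c (k + if σ then 1 else 0) q2 s2 := by
  obtain ⟨l, hs, hq⟩ := hInv
  obtain ⟨γ, w, hδ, hbr⟩ := hm
  rcases hbr with ⟨hne, s', he, hf⟩ | ⟨hγ, hw, _, _⟩
  swap
  · exact absurd ⟨hγ, hw⟩ (delta_shape hδ)
  dsimp only at he hf hδ
  rw [pda_delta] at hδ
  rcases hδ with h | h | ⟨N, B, C, hN, h⟩ | ⟨N, b, hN, h⟩ | ⟨b, γ', h⟩ <;>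
    simp only [Prod.mk.injEq] at h
  · -- start: push S1
    obtain ⟨h1, h2, h3, h4, h5⟩ := h
    subst h1; subst h2; subst h3; subst h4; subst h5
    obtain ⟨hk0, hl0⟩ := hq
    subst hk0; subst hl0
    rw [hs] at he
    obtain ⟨-, rfl⟩ := stk_none_nil he
    refine ⟨[S1 P1 P2], by simp [hf, stk], ?_⟩
    intro j
    rw [exp_str1]
    simpa [Mseq] using hGen.2 j
  · -- expand on bottom: push S2
    obtain ⟨h1, h2, h3, h4, h5⟩ := h
    subst h1; subst h2; subst h3; subst h4; subst h5
    rw [hs] at he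
    obtain ⟨rfl, rfl⟩ := stk_none_nil he
    refine ⟨[S2 P1 P2], by simp [hf, stk], ?_⟩
    intro j
    rw [exp_str2, Mseq_wrap hGen.1 j]
    have := hq j
    simpa [exp] using this
  · -- expand a binary production
    obtain ⟨h1, h2, h3, h4, h5⟩ := h
    subst h1; subst h2; subst h3; subst h4; subst h5
    rw [hs] at he
    obtain ⟨t, rfl, rfl⟩ := stk_some_cons he
    refine ⟨B :: C :: t, by simp [hf, stk_cons], ?_⟩
    intro j
    have hexp : exp P1 P2 (B :: C :: t) = exp P1 P2 (N :: t) := by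
      simp [exp, expSym_inr hN]
    rw [hexp]
    simpa using hq j
  · -- pop a terminal
    obtain ⟨h1, h2, h3, h4, h5⟩ := h
    subst h1; subst h2; subst h3; subst h4; subst h5
    rw [hs] at he
    obtain ⟨t, rfl, rfl⟩ := stk_some_cons he
    have hexp : exp P1 P2 (N :: t) = b :: exp P1 P2 t := by
      simp [exp, expSym_inl hN]
    refine ⟨t, by simp [hf], ?_, ?_⟩
    · have h0 := hq 0
      rw [hexp, Mseq_cons_zero] at h0
      have : b = c (k + 0) := by injection h0
      simpa using this
    · intro j
      have hj := hq (j + 1)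
      rw [hexp, Mseq_cons_succ] at hj
      rw [hj]
      congr 2
      simp only [if_neg Bool.false_ne_true]
      omega
  · -- reading a letter
    obtain ⟨h1, h2, h3, h4, h5⟩ := h
    subst h1; subst h2; subst h3; subst h4; subst h5
    obtain ⟨hb, hl⟩ := hq
    refine ⟨l, ?_, ?_⟩
    · rw [hf, List.singleton_append, ← he, hs]
    · intro j
      simpa using hl j

theorem inv_steps {c : ℕ → Bool} (hGen : Generates P1.str P2.str c)
    {k : ℕ} {cfg : St × List (Gam P1 P2)}
    (h : (pda P1 P2).Steps (St.start, [none]) k cfg) : Inv c k cfg.1 cfg.2 := by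
  induction h with
  | refl => exact ⟨[], rfl, rfl, rfl⟩
  | tail hstep hmv ih =>
    rename_i k' c2 σ c3
    obtain ⟨qa, sa⟩ := c2
    obtain ⟨qb, sb⟩ := c3
    exact inv_step hGen ih hmv

end IndPair
namespace IndPair

variable {P1 P2 : CnfSLP Bool}

theorem reachOut : ∀ (W : ℕ) (l : List (Sym P1 P2)), weight P1 P2 l ≤ W → l ≠ [] →
    ∃ b l', (pda P1 P2).Steps (St.expand, stk P1 P2 l) 0 (St.out b, stk P1 P2 l') ∧
      exp P1 P2 l = b :: exp P1 P2 l' := by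
  intro W
  induction W with
  | zero =>
    intro l hw hne
    cases l with
    | nil => exact absurd rfl hne
    | cons N t =>
      exfalso
      have := nodesSym_pos (P1 := P1) (P2 := P2) N
      simp [weight] at hw
      omega
  | succ W ih =>
    intro l hw hne
    obtain ⟨N, t, rfl⟩ : ∃ N t, l = N :: t := by
      cases l with
      | nil => exact absurd rfl hne
      | cons N t => exact ⟨N, t, rfl⟩
    rcases hN : prodSym P1 P2 N with b | ⟨B, C⟩
    · refine ⟨b, t, ?_, by simp [exp, expSym_inl hN]⟩
      have hδ : (St.expand, false, some N, St.out b, ([] : List (Gam P1 P2))) ∈ delta P1 P2 :=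
        Or.inr (Or.inr (Or.inr (Or.inl ⟨N, b, hN, rfl⟩)))
      have hm := move_of (stk P1 P2 t) hδ (Or.inl (by simp))
      rw [← stk_cons] at hm
      exact steps_cast (by simp) (move_single hm)
    · have hδ : (St.expand, false, some N, St.expand,
          ([some B, some C] : List (Gam P1 P2))) ∈ delta P1 P2 :=
        Or.inr (Or.inr (Or.inl ⟨N, B, C, hN, rfl⟩))
      have hm := move_of (stk P1 P2 t) hδ (Or.inl (by simp))
      rw [← stk_cons] at hm
      have hstk : ([some B, some C] : List (Gam P1 P2)) ++ stk P1 P2 t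
          = stk P1 P2 (B :: C :: t) := by simp [stk_cons]
      rw [hstk] at hm
      have hw' : weight P1 P2 (B :: C :: t) ≤ W := by
        have h1 := nodesSym_inr hN
        simp only [weight] at hw ⊢
        omega
      obtain ⟨b, l', hsteps, hexp⟩ := ih (B :: C :: t) hw' (by simp)
      refine ⟨b, l', steps_cast (by simp) (steps_trans (move_single hm) hsteps), ?_⟩
      have : exp P1 P2 (N :: t) = exp P1 P2 (B :: C :: t) := by
        simp [exp, expSym_inr hN]
      rw [this, hexp]

theorem reach_aux {c : ℕ → Bool} (hGen : Generates P1.str P2.str c) {k : ℕ}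
    {l : List (Sym P1 P2)}
    (hl : ∀ j, Mseq P2 (exp P1 P2 l) j = some (c (k + j)))
    (hsteps : (pda P1 P2).Steps (St.start, [none]) k (St.expand, stk P1 P2 l)) :
    ∃ l', (pda P1 P2).Steps (St.start, [none]) k (St.out (c k), stk P1 P2 l') ∧
      ∀ j, Mseq P2 (exp P1 P2 l') j = some (c (k + 1 + j)) := by
  obtain ⟨l2, hne2, hsteps2, hl2⟩ : ∃ l2, l2 ≠ [] ∧
      (pda P1 P2).Steps (St.start, [none]) k (St.expand, stk P1 P2 l2) ∧
      ∀ j, Mseq P2 (exp P1 P2 l2) j = some (c (k + j)) := by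
    cases l with
    | cons N t => exact ⟨N :: t, by simp, hsteps, hl⟩
    | nil =>
      refine ⟨[S2 P1 P2], by simp, ?_, ?_⟩
      · have hδ : (St.expand, false, none, St.expand,
            ([some (S2 P1 P2), none] : List (Gam P1 P2))) ∈ delta P1 P2 :=
          Or.inr (Or.inl rfl)
        have hm := move_of ([] : List (Gam P1 P2)) hδ (Or.inr (by simp))
        have hm2 : (pda P1 P2).Move (St.expand, stk P1 P2 ([] : List (Sym P1 P2))) false
            (St.expand, stk P1 P2 [S2 P1 P2]) := by
          simpa [stk] using hm
        exact steps_cast (by simp) (steps_trans hsteps (move_single hm2))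
      · intro j
        rw [exp_str2, Mseq_wrap hGen.1 j]
        simpa [exp] using hl j
  obtain ⟨b, l', hsteps0, hexp⟩ := reachOut (weight P1 P2 l2) l2 le_rfl hne2
  have hb : b = c k := by
    have h0 := hl2 0
    rw [hexp, Mseq_cons_zero] at h0
    have := Option.some.inj h0
    simpa using this
  refine ⟨l', ?_, ?_⟩
  · rw [← hb]
    exact steps_cast (by simp) (steps_trans hsteps2 hsteps0)
  · intro j
    have hj := hl2 (j + 1)
    rw [hexp, Mseq_cons_succ] at hj
    rw [hj]
    congr 2
    omega

theorem reachK {c : ℕ → Bool} (hGen : Generates P1.str P2.str c) (k : ℕ) :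
    ∃ l, (pda P1 P2).Steps (St.start, [none]) k (St.out (c k), stk P1 P2 l) ∧
      ∀ j, Mseq P2 (exp P1 P2 l) j = some (c (k + 1 + j)) := by
  induction k with
  | zero =>
    have hδ : (St.start, false, none, St.expand,
        ([some (S1 P1 P2), none] : List (Gam P1 P2))) ∈ delta P1 P2 := Or.inl rfl
    have hm := move_of ([] : List (Gam P1 P2)) hδ (Or.inr (by simp))
    have h2 : ([some (S1 P1 P2), none] : List (Gam P1 P2)) ++ []
        = stk P1 P2 [S1 P1 P2] := by simp [stk]
    rw [h2] at hm
    have hsteps : (pda P1 P2).Steps (St.start, [none]) 0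
        (St.expand, stk P1 P2 [S1 P1 P2]) :=
      steps_cast (by simp) (move_single hm)
    refine reach_aux hGen (fun j => ?_) hsteps
    rw [exp_str1]
    simpa [Mseq] using hGen.2 j
  | succ k ihk =>
    obtain ⟨l, hsteps, hl⟩ := ihk
    obtain ⟨γ, s', hγ⟩ : ∃ γ s', stk P1 P2 l = γ :: s' := by
      cases l with
      | nil => exact ⟨none, [], rfl⟩
      | cons N t => exact ⟨some N, stk P1 P2 t, rfl⟩
    have hδ : (St.out (c k), true, γ, St.expand, [γ]) ∈ delta P1 P2 :=
      Or.inr (Or.inr (Or.inr (Or.inr ⟨c k, γ, rfl⟩)))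
    have hm := move_of s' hδ (Or.inr (by simp))
    rw [← hγ] at hm
    have hm2 : (pda P1 P2).Move (St.out (c k), stk P1 P2 l) true
        (St.expand, stk P1 P2 l) := by
      have : ([γ] : List (Gam P1 P2)) ++ s' = γ :: s' := by simp
      rw [this, ← hγ] at hm
      exact hm
    have hsteps2 : (pda P1 P2).Steps (St.start, [none]) (k + 1)
        (St.expand, stk P1 P2 l) :=
      steps_cast (by simp) (steps_trans hsteps (move_single hm2))
    exact reach_aux hGen (fun j => hl j) hsteps2

end IndPair
/-- There is an absolute constant `C` such that for every
unary language `L ⊆ {a}*` admitting an indicator pair of size `m`, there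
exists a udpda `A` of size at most `C·m` with `L(A) = L`. -/
theorem indicator_pair_to_udpda :
    ∃ C : ℕ, ∀ (L : Set ℕ) (m : ℕ) (P1 P2 : CnfSLP Bool),
      IsIndicatorPair P1 P2 L → P1.size + P2.size = m →
      ∃ (Q Γ : Type) (A : UDPDA Q Γ), A.size ≤ C * m ∧ A.lang = L := by
  refine ⟨8, ?_⟩
  intro L m P1 P2 hip hm
  obtain ⟨c, hcL, hGen⟩ := hip
  refine ⟨IndPair.St, IndPair.Gam P1 P2, IndPair.mkA P1 P2, ?_, ?_⟩
  · -- size bound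
    have h1 : 1 ≤ P1.n := P1.ax.pos
    have h2 : 1 ≤ P2.n := P2.ax.pos
    have hsz : (IndPair.mkA P1 P2).size = 4 * (P1.n + P2.n + 1) := by
      show Nat.card IndPair.St * Nat.card (IndPair.Gam P1 P2) = _
      rw [IndPair.card_St]
      simp [Nat.card_eq_fintype_card]
    rw [hsz, ← hm]
    simp only [CnfSLP.size]
    omega
  · -- language
    ext k
    constructor
    · rintro ⟨⟨q, s⟩, hsteps, hfin⟩
      have hq : q = IndPair.St.out true := hfin
      subst hq
      have hInv := IndPair.inv_steps hGen hsteps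
      obtain ⟨l, hsl, hb, -⟩ := hInv
      exact (hcL k).mp hb.symm
    · intro hk
      have hck : c k = true := (hcL k).mpr hk
      obtain ⟨l, hsteps, -⟩ := IndPair.reachK hGen k
      refine ⟨(IndPair.St.out (c k), IndPair.stk P1 P2 l), hsteps, ?_⟩
      show IndPair.St.out (c k) ∈ ({IndPair.St.out true} : Set IndPair.St)
      rw [hck]
      rfl
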